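/- Let 1 ≤ ℓ ≤ m ≤ N. Let f₁, …, f_m : ℝ^N → ℝ be real-analytic functions, each invariant under translations in the directions e₁, …, e_m, and suppose f_ℓ is not a constant function. Let H be the vector field H(x) = Σ_{i=1}^m f_i(x)·e_i, let V : ℝ^N → ℝ^N be a real-analytic vector field invariant under translations in the directions e₁, …, e_m, and let X be the vector field X(x) = exp(x_ℓ)·V(x). If [H, X] = λ·X for some λ ∈ ℝ, then V is identically zero. -/

import Mathlib

set_option maxHeartbeats 1000000
set_option synthInstance.maxHeartbeats 400000

noncomputable section

lemma dir_deriv_zero {E : Type*} [NormedAddCommGroup E] [NormedSpace ℝ E]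
    {N : ℕ} (g : (Fin N → ℝ) → E) (j : Fin N)
    (hinv : ∀ (x : Fin N → ℝ) (t : ℝ), g (x + t • (Pi.single j (1:ℝ) : Fin N → ℝ)) = g x)
    (x : Fin N → ℝ) (hg : DifferentiableAt ℝ g x) :
    fderiv ℝ g x (Pi.single j (1:ℝ)) = 0 := by
  set w : Fin N → ℝ := Pi.single j (1:ℝ) with hw
  have hc : HasDerivAt (fun t : ℝ => x + t • w) w 0 := by
    simpa using ((hasDerivAt_id (0:ℝ)).smul_const w).const_add x
  have hx0 : x + (0:ℝ) • w = x := by simp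
  have hgx : HasFDerivAt g (fderiv ℝ g x) ((fun t : ℝ => x + t • w) 0) := by
    simpa [hx0] using hg.hasFDerivAt
  have h1 : HasDerivAt (fun t : ℝ => g (x + t • w)) (fderiv ℝ g x w) 0 :=
    hgx.comp_hasDerivAt 0 hc
  have h2 : (fun t : ℝ => g (x + t • w)) = fun _ => g x := funext (hinv x)
  rw [h2] at h1
  exact h1.unique (hasDerivAt_const _ _)

/-- Let `1 ≤ ℓ ≤ m ≤ N`, let `f₁, …, f_m` be real-analytic functions on `ℝ^N`, invariant
under translations in the directions `e₁, …, e_m`, with `f_ℓ` non-constant, and let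
`H = Σ_{i ≤ m} f_i • e_i`.  If `V` is a real-analytic vector field invariant under
translations in the directions `e₁, …, e_m` and the field `X x = exp (x_ℓ) • V x`
satisfies `[H, X] = λ • X`, then `V ≡ 0`. -/
theorem eigenfield_of_nonconstant_coefficient_vanishes
    (N ℓ m : ℕ) (hℓ : 1 ≤ ℓ) (hℓm : ℓ ≤ m) (hmN : m ≤ N)
    (f : Fin N → (Fin N → ℝ) → ℝ)
    (hfA : ∀ i : Fin N, (i : ℕ) < m → ∀ x, AnalyticAt ℝ (f i) x)
    (hfInv : ∀ i j : Fin N, (i : ℕ) < m → (j : ℕ) < m → ∀ (x : Fin N → ℝ) (t : ℝ),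
      f i (x + t • (Pi.single j (1 : ℝ) : Fin N → ℝ)) = f i x)
    (hfl : ¬ ∃ c : ℝ, ∀ x, f ⟨ℓ - 1, by omega⟩ x = c)
    (V : (Fin N → ℝ) → (Fin N → ℝ))
    (hVA : ∀ x, AnalyticAt ℝ V x)
    (hVInv : ∀ j : Fin N, (j : ℕ) < m → ∀ (x : Fin N → ℝ) (t : ℝ),
      V (x + t • (Pi.single j (1 : ℝ) : Fin N → ℝ)) = V x)
    (lam : ℝ)
    (hbr : VectorField.lieBracket ℝ
        (fun x => ∑ i ∈ Finset.univ.filter (fun i : Fin N => (i : ℕ) < m),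
          f i x • (Pi.single i (1 : ℝ) : Fin N → ℝ))
        (fun x => Real.exp (x ⟨ℓ - 1, by omega⟩) • V x)
      = fun x => lam • (Real.exp (x ⟨ℓ - 1, by omega⟩) • V x)) :
    ∀ x, V x = 0 := by
  set L : Fin N := ⟨ℓ - 1, by omega⟩ with hL
  have hLm : (L : ℕ) < m := by simp [hL]; omega
  set s : Finset (Fin N) := Finset.univ.filter (fun i : Fin N => (i : ℕ) < m) with hs
  set H : (Fin N → ℝ) → (Fin N → ℝ) :=
    fun x => ∑ i ∈ s, f i x • (Pi.single i (1 : ℝ) : Fin N → ℝ) with hH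
  set X : (Fin N → ℝ) → (Fin N → ℝ) := fun x => Real.exp (x L) • V x with hX
  -- the pointwise consequence of the bracket hypothesis
  have key : ∀ x : Fin N → ℝ, (f L x - lam) • V x =
      ∑ i ∈ s, (fderiv ℝ (f i) x (V x)) • (Pi.single i (1 : ℝ) : Fin N → ℝ) := by
    intro x
    have hVd : DifferentiableAt ℝ V x := (hVA x).differentiableAt
    -- derivative of X
    have hproj : HasFDerivAt (fun y : Fin N → ℝ => y L)
        (ContinuousLinearMap.proj L : (Fin N → ℝ) →L[ℝ] ℝ) x :=
      (ContinuousLinearMap.proj L : (Fin N → ℝ) →L[ℝ] ℝ).hasFDerivAt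
    have hexp : HasFDerivAt (fun y : Fin N → ℝ => Real.exp (y L))
        (Real.exp (x L) • (ContinuousLinearMap.proj L : (Fin N → ℝ) →L[ℝ] ℝ)) x :=
      by have h := (Real.hasDerivAt_exp (x L)).comp_hasFDerivAt x hproj; exact h
    have hXd : HasFDerivAt X
        (Real.exp (x L) • fderiv ℝ V x +
          (Real.exp (x L) • (ContinuousLinearMap.proj L : (Fin N → ℝ) →L[ℝ] ℝ)).smulRight (V x)) x :=
      hexp.smul hVd.hasFDerivAt
    -- derivative of H
    have hHd : HasFDerivAt H
        (∑ i ∈ s, (fderiv ℝ (f i) x).smulRight (Pi.single i (1 : ℝ) : Fin N → ℝ)) x := by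
      apply HasFDerivAt.fun_sum
      intro i hi
      have him : (i : ℕ) < m := by simpa [hs] using hi
      exact ((hfA i him x).differentiableAt.hasFDerivAt).smul_const _
    -- V's derivative kills H x
    have hVH : fderiv ℝ V x (H x) = 0 := by
      rw [hH]
      simp only [map_sum, map_smul]
      apply Finset.sum_eq_zero
      intro i hi
      have him : (i : ℕ) < m := by simpa [hs] using hi
      rw [dir_deriv_zero V i (hVInv i him) x hVd, smul_zero]
    -- (H x) L = f L x
    have hHL : H x L = f L x := by
      rw [hH]
      simp only [Finset.sum_apply, Pi.smul_apply, Pi.single_apply, smul_eq_mul]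
      rw [Finset.sum_eq_single L]
      · simp
      · intro b hb hbL; simp [Ne.symm hbL]
      · intro hb; exact absurd (by simp [hs, hLm]) hb
    have hx := congrFun hbr x
    simp only [VectorField.lieBracket] at hx
    rw [hXd.fderiv, hHd.fderiv] at hx
    simp only [ContinuousLinearMap.add_apply, ContinuousLinearMap.smul_apply,
      ContinuousLinearMap.smulRight_apply, ContinuousLinearMap.coe_sum',
      Finset.sum_apply, ContinuousLinearMap.proj_apply, hVH, smul_zero, zero_add] at hx
    -- hx : (exp (x L) * H x L) • V x - ∑ i in s, (fderiv f i x (X x)) • single i 1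
    --        = lam • (exp (x L) • V x)
    have hXx : X x = Real.exp (x L) • V x := rfl
    have hfi : ∀ i ∈ s, (fderiv ℝ (f i) x) (X x) • (Pi.single i (1:ℝ) : Fin N → ℝ)
        = Real.exp (x L) • ((fderiv ℝ (f i) x (V x)) • (Pi.single i (1:ℝ) : Fin N → ℝ)) := by
      intro i hi
      rw [hXx, map_smul]
      simp [smul_smul]
    rw [Finset.sum_congr rfl hfi, ← Finset.smul_sum, hHL] at hx
    have hexp_ne : Real.exp (x L) ≠ 0 := Real.exp_ne_zero _
    have := hx
    -- rearrange: exp • (f L x • V x) - exp • W = exp • (lam • V x)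
    rw [show (Real.exp (x L) • f L x) • V x = Real.exp (x L) • (f L x • V x) by
        rw [smul_eq_mul, smul_smul],
      show lam • (Real.exp (x L) • V x) = Real.exp (x L) • (lam • V x) by
        rw [smul_comm], ← smul_sub] at hx
    have hx2 := smul_right_injective (Fin N → ℝ) hexp_ne hx
    have : f L x • V x - ∑ i ∈ s, (fderiv ℝ (f i) x (V x)) •
        (Pi.single i (1:ℝ) : Fin N → ℝ) = lam • V x := hx2
    rw [sub_smul]
    linear_combination (norm := module) this
  -- On the set where f L x ≠ lam, V vanishes
  have hzero : ∀ x : Fin N → ℝ, f L x ≠ lam → V x = 0 := by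
    intro x hne
    have hkey := key x
    -- coordinates ≥ m vanish
    have hhigh : ∀ k : Fin N, m ≤ (k : ℕ) → V x k = 0 := by
      intro k hk
      have := congrFun hkey k
      simp only [Pi.smul_apply, smul_eq_mul, Finset.sum_apply, Pi.single_apply] at this
      rw [Finset.sum_eq_zero (fun i hi => by
        have him : (i : ℕ) < m := by simpa [hs] using hi
        have : k ≠ i := by intro h; rw [h] at hk; omega
        simp [this])] at this
      have hsub : f L x - lam ≠ 0 := sub_ne_zero.mpr hne
      rcases mul_eq_zero.mp this with h | h
      · exact absurd h hsub
      · exact h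
    -- hence all directional derivatives of f i at V x vanish
    have hW : ∀ i ∈ s, fderiv ℝ (f i) x (V x) = 0 := by
      intro i hi
      have him : (i : ℕ) < m := by simpa [hs] using hi
      have hVx : V x = ∑ j : Fin N, V x j • (Pi.single j (1:ℝ) : Fin N → ℝ) := by
        ext k
        simp [Pi.single_apply]
      have hfd : DifferentiableAt ℝ (f i) x := (hfA i him x).differentiableAt
      rw [hVx, map_sum]
      apply Finset.sum_eq_zero
      intro j _
      rw [map_smul]
      by_cases hjm : (j : ℕ) < m
      · rw [dir_deriv_zero (f i) j (hfInv i j him hjm) x hfd]; simp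
      · rw [hhigh j (by omega)]; simp
    rw [Finset.sum_eq_zero (fun i hi => by rw [hW i hi, zero_smul])] at hkey
    have hsub : f L x - lam ≠ 0 := sub_ne_zero.mpr hne
    exact (smul_eq_zero.mp hkey).resolve_left hsub
  -- now conclude by the identity principle
  intro x
  by_contra hVx
  have hcont : Continuous V := continuous_iff_continuousAt.mpr fun y => (hVA y).continuousAt
  have hopen : IsOpen {y : Fin N → ℝ | V y ≠ 0} :=
    isOpen_compl_singleton.preimage hcont
  have hnhds : {y : Fin N → ℝ | V y ≠ 0} ∈ nhds x := hopen.mem_nhds hVx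
  have hev : (fun y => f L y - lam) =ᶠ[nhds x] 0 := by
    filter_upwards [hnhds] with y hy
    have : f L y = lam := by
      by_contra h
      exact hy (hzero y h)
    simp [this]
  have hA : AnalyticOnNhd ℝ (fun y => f L y - lam) Set.univ :=
    fun y _ => (hfA L hLm y).sub analyticAt_const
  have := hA.eqOn_zero_of_preconnected_of_eventuallyEq_zero isPreconnected_univ
    (Set.mem_univ x) hev
  apply hfl
  exact ⟨lam, fun y => by have := this (Set.mem_univ y); simpa [sub_eq_zero] using this⟩

end
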